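/- For a natural number n ≥ 3, the set of points (x,y) ∈ [0,1]^2 satisfying 1/2 - n x/(n+1) + y/(n+1) ≥ 0 and 1/2 - n y/(n+1) + x/(n+1) ≥ 0 equals the convex hull of the four points (0,0), ((n+1)/(2n), 0), (0, (n+1)/(2n)), ((n+1)/(2(n-1)), (n+1)/(2(n-1))). -/

import Mathlib

lemma combo_mem (v0 v1 v2 v3 : ℝ × ℝ) {a0 a1 a2 a3 : ℝ}
    (h0 : 0 ≤ a0) (h1 : 0 ≤ a1) (h2 : 0 ≤ a2) (h3 : 0 ≤ a3)
    (hs : a0 + a1 + a2 + a3 = 1) :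
    a0 • v0 + a1 • v1 + a2 • v2 + a3 • v3 ∈
      convexHull ℝ ({v0, v1, v2, v3} : Set (ℝ × ℝ)) := by
  have hc : Convex ℝ (convexHull ℝ ({v0, v1, v2, v3} : Set (ℝ × ℝ))) := convex_convexHull ℝ _
  have := hc.sum_mem (t := (Finset.univ : Finset (Fin 4))) (w := ![a0, a1, a2, a3])
      (z := ![v0, v1, v2, v3]) ?_ ?_ ?_
  · simpa [Fin.sum_univ_four, add_assoc] using this
  · intro i _; fin_cases i <;> assumption
  · simp [Fin.sum_univ_four]; linarith
  · intro i _; fin_cases i <;> exact subset_convexHull ℝ _ (by simp)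

set_option maxHeartbeats 1000000 in
/-- The K-semistable domain of (Pⁿ, Q+Q') as a polytope. -/
theorem stmt_9 (n : ℕ) (hn : 3 ≤ n) :
    {p : ℝ × ℝ | p.1 ∈ Set.Icc (0 : ℝ) 1 ∧ p.2 ∈ Set.Icc (0 : ℝ) 1 ∧
        1 / 2 - (n : ℝ) * p.1 / ((n : ℝ) + 1) + p.2 / ((n : ℝ) + 1) ≥ 0 ∧
        1 / 2 - (n : ℝ) * p.2 / ((n : ℝ) + 1) + p.1 / ((n : ℝ) + 1) ≥ 0} =
      convexHull ℝ {((0 : ℝ), (0 : ℝ)), (((n : ℝ) + 1) / (2 * n), 0),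
        (0, ((n : ℝ) + 1) / (2 * n)),
        (((n : ℝ) + 1) / (2 * ((n : ℝ) - 1)), ((n : ℝ) + 1) / (2 * ((n : ℝ) - 1)))} := by
  have hN : (3 : ℝ) ≤ (n : ℝ) := by exact_mod_cast hn
  set N := (n : ℝ) with hNdef
  have hN0 : (0 : ℝ) < N := by linarith
  have hN1 : (0 : ℝ) < N + 1 := by linarith
  have hNm1 : (0 : ℝ) < N - 1 := by linarith
  have e : ∀ t s : ℝ, 1 / 2 - N * t / (N + 1) + s / (N + 1)
      = ((N + 1) / 2 - N * t + s) / (N + 1) := by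
    intro t s; field_simp
  have key : ∀ t s : ℝ, N * t - s ≤ (N + 1) / 2 →
      1 / 2 - N * t / (N + 1) + s / (N + 1) ≥ 0 := by
    intro t s hts
    rw [e, ge_iff_le]
    apply div_nonneg _ hN1.le
    linarith
  have key2 : ∀ t s : ℝ, 1 / 2 - N * t / (N + 1) + s / (N + 1) ≥ 0 →
      N * t - s ≤ (N + 1) / 2 := by
    intro t s hts
    rw [e, ge_iff_le, le_div_iff₀ hN1, zero_mul] at hts
    linarith
  apply Set.eq_of_subset_of_subset
  · -- region ⊆ hull
    rintro ⟨x, y⟩ ⟨⟨hx0, hx1⟩, ⟨hy0, hy1⟩, h1, h2⟩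
    simp only [Set.mem_setOf_eq] at h1 h2
    have k1 : N * x - y ≤ (N + 1) / 2 := key2 _ _ h1
    have k2 : N * y - x ≤ (N + 1) / 2 := key2 _ _ h2
    rcases le_total y x with hxy | hxy
    · -- y ≤ x : weights on v0, v1, v3
      set a1 : ℝ := 2 * N * (x - y) / (N + 1) with ha1def
      set a3 : ℝ := 2 * (N - 1) * y / (N + 1) with ha3def
      set a0 : ℝ := 1 - a1 - a3 with ha0def
      have hb1 : 0 ≤ a1 := div_nonneg (by nlinarith) hN1.le
      have hb3 : 0 ≤ a3 := div_nonneg (by nlinarith) hN1.le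
      have hb0 : 0 ≤ a0 := by
        rw [ha0def, ha1def, ha3def]
        rw [sub_sub, ← add_div, sub_nonneg, div_le_one hN1]
        nlinarith
      have hrep : ((x, y) : ℝ × ℝ) =
          a0 • ((0 : ℝ), (0 : ℝ)) + a1 • ((N + 1) / (2 * N), (0 : ℝ)) +
          (0 : ℝ) • ((0 : ℝ), (N + 1) / (2 * N)) +
          a3 • ((N + 1) / (2 * (N - 1)), (N + 1) / (2 * (N - 1))) := by
        simp only [Prod.smul_mk, Prod.mk_add_mk, smul_eq_mul, Prod.mk.injEq]
        constructor
        · rw [ha1def, ha3def]; field_simp; try ring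
        · rw [ha3def]; field_simp; try ring
      rw [hrep]
      exact combo_mem _ _ _ _ hb0 hb1 le_rfl hb3 (by ring)
    · -- x ≤ y : weights on v0, v2, v3
      set a2 : ℝ := 2 * N * (y - x) / (N + 1) with ha2def
      set a3 : ℝ := 2 * (N - 1) * x / (N + 1) with ha3def
      set a0 : ℝ := 1 - a2 - a3 with ha0def
      have hb2 : 0 ≤ a2 := div_nonneg (by nlinarith) hN1.le
      have hb3 : 0 ≤ a3 := div_nonneg (by nlinarith) hN1.le
      have hb0 : 0 ≤ a0 := by
        rw [ha0def, ha2def, ha3def]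
        rw [sub_sub, ← add_div, sub_nonneg, div_le_one hN1]
        nlinarith
      have hrep : ((x, y) : ℝ × ℝ) =
          a0 • ((0 : ℝ), (0 : ℝ)) + (0 : ℝ) • ((N + 1) / (2 * N), (0 : ℝ)) +
          a2 • ((0 : ℝ), (N + 1) / (2 * N)) +
          a3 • ((N + 1) / (2 * (N - 1)), (N + 1) / (2 * (N - 1))) := by
        simp only [Prod.smul_mk, Prod.mk_add_mk, smul_eq_mul, Prod.mk.injEq]
        constructor
        · rw [ha3def]; field_simp; try ring
        · rw [ha2def, ha3def]; field_simp; try ring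
      rw [hrep]
      exact combo_mem _ _ _ _ hb0 le_rfl hb2 hb3 (by ring)
  · -- hull ⊆ region
    apply convexHull_min
    · -- vertices in region
      have hA0 : (0 : ℝ) ≤ (N + 1) / (2 * N) := by positivity
      have hA1 : (N + 1) / (2 * N) ≤ 1 := by rw [div_le_one (by positivity)]; linarith
      have hB0 : (0 : ℝ) ≤ (N + 1) / (2 * (N - 1)) := by positivity
      have hB1 : (N + 1) / (2 * (N - 1)) ≤ 1 := by
        rw [div_le_one (by positivity)]; linarith
      have hhalf : (0 : ℝ) ≤ (N + 1) / 2 := by positivity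
      have hAe : N * ((N + 1) / (2 * N)) = (N + 1) / 2 := by field_simp
      have hBe : N * ((N + 1) / (2 * (N - 1))) - (N + 1) / (2 * (N - 1)) = (N + 1) / 2 := by
        field_simp
      rintro p hp
      simp only [Set.mem_insert_iff, Set.mem_singleton_iff] at hp
      rcases hp with h | h | h | h <;> subst h <;>
        simp only [Set.mem_setOf_eq, Set.mem_Icc] <;>
        refine ⟨⟨?_, ?_⟩, ⟨?_, ?_⟩, ?_, ?_⟩ <;>
        (first
          | linarith
          | (apply key; linarith))
    · -- region is convex
      rintro ⟨px, py⟩ ⟨⟨hpx0, hpx1⟩, ⟨hpy0, hpy1⟩, hp1, hp2⟩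
        ⟨qx, qy⟩ ⟨⟨hqx0, hqx1⟩, ⟨hqy0, hqy1⟩, hq1, hq2⟩ a b ha hb hab
      simp only [Set.mem_setOf_eq] at hp1 hp2 hq1 hq2
      have kp1 := key2 _ _ hp1
      have kp2 := key2 _ _ hp2
      have kq1 := key2 _ _ hq1
      have kq2 := key2 _ _ hq2
      simp only [Set.mem_setOf_eq, Prod.smul_mk, Prod.mk_add_mk, smul_eq_mul, Set.mem_Icc]
      refine ⟨⟨by positivity, by nlinarith⟩, ⟨by positivity, by nlinarith⟩, ?_, ?_⟩
      · apply key; nlinarith [mul_le_mul_of_nonneg_left kp1 ha, mul_le_mul_of_nonneg_left kq1 hb]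
      · apply key; nlinarith [mul_le_mul_of_nonneg_left kp2 ha, mul_le_mul_of_nonneg_left kq2 hb]
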